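/- The functional R(h) = inf_{b ∈ ℝ} ( E_Q[f*(h + b)] − b ) is lower semicontinuous on bounded measurable functions with the sup-norm topology. -/

import Mathlib

open MeasureTheory Filter ENNReal

/-- Convex conjugate of an extended-real-valued function on ℝ. -/
noncomputable def fStar (f : ℝ → EReal) (s : ℝ) : EReal := ⨆ x : ℝ, ((s * x : ℝ) : EReal) - f x

/-- Positive part of an extended real, as an extended nonnegative real. -/
noncomputable def erealPos (x : EReal) : ℝ≥0∞ := if x = ⊤ then ⊤ else ENNReal.ofReal x.toReal

/-- Integral of an extended-real-valued function, with values in [-∞,∞]. -/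
noncomputable def eintegral {Ω : Type*} [MeasurableSpace Ω] (Q : Measure Ω) (g : Ω → EReal) : EReal :=
  ((∫⁻ x, erealPos (g x) ∂Q) : EReal) - ((∫⁻ x, erealPos (-(g x)) ∂Q) : EReal)

/-- The set B(Ω,Σ) of bounded measurable real-valued functions. -/
def BM (Ω : Type*) [MeasurableSpace Ω] : Set (Ω → ℝ) :=
  {g | Measurable g ∧ ∃ C, ∀ x, |g x| ≤ C}

/-- R(h) = inf_{b ∈ ℝ} ( E_Q[f*(h + b)] − b ). -/
noncomputable def Rfun {Ω : Type*} [MeasurableSpace Ω] (Q : Measure Ω) (f : ℝ → EReal)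
    (h : Ω → ℝ) : EReal :=
  ⨅ b : ℝ, eintegral Q (fun x => fStar f (h x + b)) - (b : EReal)

/-- `fStar f` is monotone when `f = ⊤` on negatives. -/
lemma fStar_mono (f : ℝ → EReal) (hneg : ∀ x : ℝ, x < 0 → f x = ⊤) :
    Monotone (fStar f) := by
  intro s t hst
  refine iSup_mono fun x => ?_
  rcases lt_or_ge x 0 with hx | hx
  · rw [hneg x hx]
    simp [sub_eq_add_neg, EReal.add_bot]
  · exact EReal.sub_le_sub (EReal.coe_le_coe_iff.2 (mul_le_mul_of_nonneg_right hst hx)) le_rfl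

lemma erealPos_mono : Monotone erealPos := by
  intro x y hxy
  unfold erealPos
  rcases eq_or_ne y ⊤ with rfl | hy
  · simp
  rcases eq_or_ne x ⊤ with rfl | hx
  · exact absurd (top_le_iff.1 hxy) hy
  simp only [hx, hy, if_neg, if_false]
  rcases eq_or_ne x ⊥ with rfl | hxb
  · simp [ENNReal.ofReal]
  · exact ENNReal.ofReal_le_ofReal (EReal.toReal_le_toReal hxy hxb hy)

lemma eintegral_mono {Ω : Type*} [MeasurableSpace Ω] (Q : Measure Ω) {g₁ g₂ : Ω → EReal}
    (hle : ∀ x, g₁ x ≤ g₂ x) : eintegral Q g₁ ≤ eintegral Q g₂ := by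
  refine EReal.sub_le_sub ?_ ?_
  · exact EReal.coe_ennreal_le_coe_ennreal_iff.2
      (lintegral_mono fun x => erealPos_mono (hle x))
  · exact EReal.coe_ennreal_le_coe_ennreal_iff.2
      (lintegral_mono fun x => erealPos_mono (EReal.neg_le_neg_iff.2 (hle x)))

lemma ereal_sub_coe_add (X : EReal) (c ε : ℝ) : X - ((c + ε : ℝ) : EReal) = X - (c : EReal) - (ε : EReal) := by
  rw [sub_eq_add_neg, sub_eq_add_neg, sub_eq_add_neg, add_assoc]
  congr 1
  rw [← EReal.coe_neg, ← EReal.coe_neg, ← EReal.coe_neg, ← EReal.coe_add, neg_add]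

/-- Key estimate: if `g ≥ h - ε` pointwise then `R(h) - ε ≤ R(g)`. -/
lemma Rfun_sub_le {Ω : Type*} [MeasurableSpace Ω] (Q : Measure Ω) (f : ℝ → EReal)
    (hneg : ∀ x : ℝ, x < 0 → f x = ⊤) {g h : Ω → ℝ} {ε : ℝ}
    (hge : ∀ x, h x - ε ≤ g x) :
    Rfun Q f h - (ε : EReal) ≤ Rfun Q f g := by
  refine le_iInf fun b => ?_
  have h1 : Rfun Q f h ≤ eintegral Q (fun x => fStar f (h x + (b - ε))) - ((b - ε : ℝ) : EReal) :=
    iInf_le _ (b - ε)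
  have h2 : eintegral Q (fun x => fStar f (h x + (b - ε))) ≤
      eintegral Q (fun x => fStar f (g x + b)) := by
    refine eintegral_mono Q fun x => fStar_mono f hneg ?_
    have := hge x
    linarith
  calc Rfun Q f h - (ε : EReal)
      ≤ (eintegral Q (fun x => fStar f (h x + (b - ε))) - ((b - ε : ℝ) : EReal)) - (ε : EReal) :=
        EReal.sub_le_sub h1 le_rfl
    _ = eintegral Q (fun x => fStar f (h x + (b - ε))) - (b : EReal) := by
        rw [← ereal_sub_coe_add]; norm_num
    _ ≤ eintegral Q (fun x => fStar f (g x + b)) - (b : EReal) := EReal.sub_le_sub h2 le_rfl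

lemma ereal_le_of_forall_le_add {a b : EReal} (h : ∀ ε : ℝ, 0 < ε → a ≤ b + (ε : EReal)) :
    a ≤ b := by
  induction b with
  | bot =>
    have := h 1 one_pos
    rwa [EReal.bot_add] at this
  | coe r =>
    by_contra hab
    push_neg at hab
    obtain ⟨c, hrc, hca⟩ := EReal.lt_iff_exists_real_btwn.1 hab
    have hε : (0:ℝ) < c - r := by exact_mod_cast sub_pos.2 (EReal.coe_lt_coe_iff.1 hrc)
    have := h (c - r) hε
    rw [← EReal.coe_add] at this
    have : a ≤ (c : EReal) := by simpa using this
    exact absurd (lt_of_lt_of_le hca this) (lt_irrefl _)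
  | top => exact le_top

/-- R is lower semicontinuous on bounded measurable functions with the sup-norm topology
(sequential formulation). -/
theorem Rfun_lowerSemicontinuous {Ω : Type*} [MeasurableSpace Ω]
    (Q : Measure Ω) [IsProbabilityMeasure Q] (f : ℝ → EReal)
    (hlsc : LowerSemicontinuous f)
    (hconv : ∀ (x y a b : ℝ), 0 < a → 0 < b → a + b = 1 →
      f (a * x + b * y) ≤ (a : EReal) * f x + (b : EReal) * f y)
    (hbot : ∀ x, f x ≠ ⊥) (h1 : f 1 = 0) (hneg : ∀ x : ℝ, x < 0 → f x = ⊤)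
    (hfin : ∃ ε > (0:ℝ), ∀ x : ℝ, |x - 1| < ε → f x ≠ ⊤)
    (h : Ω → ℝ) (hh : h ∈ BM Ω) (hn : ℕ → Ω → ℝ) (hhn : ∀ n, hn n ∈ BM Ω)
    (hunif : TendstoUniformly hn h atTop) :
    Rfun Q f h ≤ liminf (fun n => Rfun Q f (hn n)) atTop := by
  refine ereal_le_of_forall_le_add fun ε hε => ?_
  have hev : ∀ᶠ n in atTop, ∀ x, dist (h x) (hn n x) < ε :=
    (Metric.tendstoUniformly_iff.1 hunif) ε hε
  have key : ∀ᶠ n in atTop, Rfun Q f h - (ε : EReal) ≤ Rfun Q f (hn n) := by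
    filter_upwards [hev] with n hd
    refine Rfun_sub_le Q f hneg fun x => ?_
    have := hd x
    rw [Real.dist_eq] at this
    have := abs_lt.1 this
    linarith [this.1, this.2]
  have hlim : Rfun Q f h - (ε : EReal) ≤ liminf (fun n => Rfun Q f (hn n)) atTop :=
    le_liminf_of_le (by isBoundedDefault) key
  calc Rfun Q f h = Rfun Q f h - (ε : EReal) + (ε : EReal) := EReal.sub_add_cancel.symm
    _ ≤ liminf (fun n => Rfun Q f (hn n)) atTop + (ε : EReal) :=
        add_le_add hlim le_rfl
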